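/- Let p ≥ 7 be prime and A = {a_1, a_2} ⊆ F_p* with a_1 ≠ a_2. Let G = (F_p, E_A) be the Cayley digraph. If G has no directed cycles of length 1, 2, or 3, then β(G) ≤ (p-1)/2, and moreover (p-1)/2 ≤ γ(G)/2 where γ(G) = p(p-5)/2 is the number of pairs of nonadjacent vertices. -/

import Mathlib

/-- A directed graph (given by its edge relation `E`) has a directed cycle. -/
def HasDirCycle {V : Type*} (E : V → V → Prop) : Prop :=
  ∃ (n : ℕ) (u : ℕ → V), 1 ≤ n ∧ (∀ j < n, E (u j) (u (j + 1))) ∧ u n = u 0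

/-- A directed graph has a directed cycle of length at most 3 (a loop, digon,
or triangle). -/
def HasShortDirCycle {V : Type*} (E : V → V → Prop) : Prop :=
  ∃ (n : ℕ) (u : ℕ → V), 1 ≤ n ∧ n ≤ 3 ∧ (∀ j < n, E (u j) (u (j + 1))) ∧
    u n = u 0

/-- The edge set of the Cayley digraph of `A ⊆ ZMod p`. -/
def cayleyEdges (p : ℕ) [Fact p.Prime] (A : Finset (ZMod p)) :
    Finset (ZMod p × ZMod p) :=
  (Finset.univ ×ˢ A).image fun q => (q.1, q.1 + q.2)

/-- `β(G)`: minimum number of edges whose deletion makes the digraph acyclic. -/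
noncomputable def betaCayley (p : ℕ) [Fact p.Prime] (A : Finset (ZMod p)) : ℕ :=
  sInf {n | ∃ X ⊆ cayleyEdges p A, X.card = n ∧
    ¬ HasDirCycle (fun x y => (x, y) ∈ cayleyEdges p A \ X)}


lemma cast_helper (p : ℕ) [Fact p.Prime] (j w : ℕ) (hw : w ≤ p) (hjw : j * w ≤ p) :
    (j : ZMod p) * ((p - w : ℕ) : ZMod p) = ((p - j * w : ℕ) : ZMod p) := by
  push_cast [Nat.cast_sub hw, Nat.cast_sub hjw]
  rw [ZMod.natCast_self]
  ring

lemma nt_lemma (p u : ℕ) [Fact p.Prime] (hp7 : 7 ≤ p) (hu2 : 2 ≤ u) (hup : u ≤ p - 2)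
    (hmid : 2 * u ≠ p + 1) :
    ∃ j t : ℕ, 1 ≤ j ∧ j < t ∧ t ≤ (p - 1) / 2 ∧
      (j : ZMod p) * (u : ZMod p) = (t : ZMod p) := by
  have hp : p.Prime := Fact.out
  have hodd : p % 2 = 1 := Nat.odd_iff.mp (hp.odd_of_ne_two (by omega))
  by_cases hsmall : u ≤ (p - 1) / 2
  · exact ⟨1, u, le_refl 1, by omega, hsmall, by push_cast; ring⟩
  -- now u ≥ (p+3)/2
  have hu3 : p + 3 ≤ 2 * u := by omega
  obtain ⟨w, hw⟩ : ∃ w, p - u = w := ⟨_, rfl⟩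
  have hweq : u = p - w := by omega
  have hw2 : 2 ≤ w := by omega
  have hwle : 2 * w ≤ p - 3 := by omega
  by_cases hb1 : p + 1 ≤ 4 * w
  · -- j = 2, t = p - 2w
    refine ⟨2, p - 2 * w, by omega, by omega, by omega, ?_⟩
    rw [hweq, cast_helper p 2 w (by omega) (by omega)]
  · -- 4w ≤ p, and p odd prime so 4w ≤ p - 1
    have hb2 : 4 * w ≤ p - 1 := by omega
    by_cases hw3 : 3 ≤ w
    · -- general case
      obtain ⟨q, hq⟩ : ∃ q, (p - 1) / (2 * w) = q := ⟨_, rfl⟩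
      have hA1 : q * (2 * w) ≤ p - 1 := hq ▸ Nat.div_mul_le_self _ _
      obtain ⟨r, hr1, hr2⟩ : ∃ r, 2 * w * q + r = p - 1 ∧ r < 2 * w :=
        ⟨(p - 1) % (2 * w), by rw [← hq]; exact Nat.div_add_mod _ _,
          Nat.mod_lt _ (by omega)⟩
      have hq2 : 2 ≤ q := by
        rw [← hq, Nat.le_div_iff_mul_le (show 0 < 2 * w by omega)]; omega
      obtain ⟨B, hB⟩ : ∃ B, q * w = B := ⟨_, rfl⟩
      have hBB : 2 * w * q = 2 * B := by rw [← hB]; ring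
      -- key nonlinear fact
      have key2 : q + w + 1 ≤ B := by
        obtain ⟨q', rfl⟩ : ∃ q', q = q' + 2 := ⟨q - 2, by omega⟩
        obtain ⟨w', rfl⟩ : ∃ w', w = w' + 3 := ⟨w - 3, by omega⟩
        obtain ⟨C, hC⟩ : ∃ C, q' * w' = C := ⟨_, rfl⟩
        have : (q' + 2) * (w' + 3) = C + 3 * q' + 2 * w' + 6 := by rw [← hC]; ring
        omega
      have hjw : (q + 1) * w = B + w := by rw [← hB]; ring
      refine ⟨q + 1, p - (B + w), by omega, by omega, by omega, ?_⟩
      rw [hweq, cast_helper p (q + 1) w (by omega) (by rw [hjw]; omega), hjw]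
    · -- w = 2, u = p - 2
      have hw2' : w = 2 := by omega
      have h9 : p ≠ 9 := by intro h; rw [h] at hp; norm_num at hp
      refine ⟨(p - 1) / 4 + 1, p - ((p - 1) / 4 + 1) * 2, by omega, by omega, by omega, ?_⟩
      rw [hweq, hw2', cast_helper p ((p - 1) / 4 + 1) 2 (by omega) (by omega)]

lemma mem_cayley_iff {p : ℕ} [Fact p.Prime] {A : Finset (ZMod p)} {e : ZMod p × ZMod p} :
    e ∈ cayleyEdges p A ↔ ∃ a ∈ A, e.2 = e.1 + a := by
  simp only [cayleyEdges, Finset.mem_image, Finset.mem_product, Finset.mem_univ, true_and,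
    Prod.ext_iff]
  constructor
  · rintro ⟨⟨x, a⟩, ha, h1, h2⟩
    exact ⟨a, ha, by simp_all⟩
  · rintro ⟨a, ha, h⟩
    exact ⟨(e.1, a), ha, rfl, h.symm⟩

lemma mem_cayley {p : ℕ} [Fact p.Prime] {A : Finset (ZMod p)} (x : ZMod p) {a : ZMod p}
    (ha : a ∈ A) : (x, x + a) ∈ cayleyEdges p A :=
  mem_cayley_iff.mpr ⟨a, ha, rfl⟩

lemma no_cycle_of_increasing {V : Type*} (E : V → V → Prop) (φ : V → ℕ)
    (h : ∀ x y, E x y → φ x < φ y) : ¬ HasDirCycle E := by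
  rintro ⟨n, u, hn, hE, hloop⟩
  have key : ∀ i, i ≤ n → 1 ≤ i → φ (u 0) < φ (u i) := by
    intro i
    induction i with
    | zero => omega
    | succ k ih =>
      intro hk _
      have hedge := h _ _ (hE k (by omega))
      rcases Nat.eq_zero_or_pos k with hk0 | hk1
      · rw [hk0] at hedge ⊢; omega
      · have := ih (by omega) hk1
        omega
  have := key n (le_refl n) hn
  rw [hloop] at this
  omega

lemma card_bad_le {p : ℕ} [Fact p.Prime] (T a : ZMod p) (hTa : T * a ≠ 0)
    (X : Finset (ZMod p × ZMod p))
    (hX : ∀ e ∈ X, e.2 = e.1 + a ∧ (T * e.2).val ≤ (T * e.1).val) :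
    X.card ≤ (T * a).val := by
  have hT : T ≠ 0 := fun h => hTa (by rw [h, zero_mul])
  have hv1 : 1 ≤ (T * a).val := by
    rcases Nat.eq_zero_or_pos (T * a).val with h | h
    · exact absurd ((ZMod.val_eq_zero _).mp h) hTa
    · exact h
  have hvp : (T * a).val < p := ZMod.val_lt _
  have hcard : X.card ≤ (Finset.Ico (p - (T * a).val) p).card := by
    apply Finset.card_le_card_of_injOn (fun e => (T * e.1).val)
    · intro e he
      obtain ⟨h2, hle⟩ := hX e he
      simp only [Finset.mem_coe, Finset.mem_Ico]
      refine ⟨?_, ZMod.val_lt _⟩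
      by_contra hlt
      push_neg at hlt
      have hsum : (T * e.1).val + (T * a).val < p := by omega
      have : (T * e.2) = T * e.1 + T * a := by rw [h2]; ring
      rw [this, ZMod.val_add_of_lt hsum] at hle
      omega
    · intro e he e' he' hval
      have h1 : T * e.1 = T * e'.1 := ZMod.val_injective p hval
      have h1' : e.1 = e'.1 := mul_left_cancel₀ hT h1
      have := (hX e he).1
      have := (hX e' he').1
      exact Prod.ext h1' (by simp_all)
  rw [Nat.card_Ico] at hcard
  omega

lemma beta_le {p : ℕ} [Fact p.Prime] (a₁ a₂ : ZMod p) (h1 : a₁ ≠ 0) (h2 : a₂ ≠ 0)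
    (T : ZMod p) (hT : T ≠ 0) :
    betaCayley p ({a₁, a₂} : Finset (ZMod p)) ≤ (T * a₁).val + (T * a₂).val := by
  classical
  set A : Finset (ZMod p) := {a₁, a₂} with hA
  set X : Finset (ZMod p × ZMod p) :=
    (cayleyEdges p A).filter (fun e => (T * e.2).val ≤ (T * e.1).val) with hXdef
  have hacyc : ¬ HasDirCycle (fun x y => (x, y) ∈ cayleyEdges p A \ X) := by
    apply no_cycle_of_increasing _ (fun x => (T * x).val)
    intro x y hxy
    rw [Finset.mem_sdiff, hXdef, Finset.mem_filter] at hxy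
    push_neg at hxy
    exact hxy.2 hxy.1
  have hcard : X.card ≤ (T * a₁).val + (T * a₂).val := by
    set X₁ := X.filter (fun e => e.2 = e.1 + a₁) with hX1
    set X₂ := X.filter (fun e => e.2 = e.1 + a₂) with hX2
    have hsub : X ⊆ X₁ ∪ X₂ := by
      intro e he
      have hmem : e ∈ cayleyEdges p A := Finset.mem_of_mem_filter e he
      rw [mem_cayley_iff] at hmem
      obtain ⟨a, ha, hea⟩ := hmem
      rw [hA] at ha
      simp only [Finset.mem_insert, Finset.mem_singleton] at ha
      rcases ha with rfl | rfl
      · exact Finset.mem_union_left _ (Finset.mem_filter.mpr ⟨he, hea⟩)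
      · exact Finset.mem_union_right _ (Finset.mem_filter.mpr ⟨he, hea⟩)
    have hTa1 : T * a₁ ≠ 0 := mul_ne_zero hT h1
    have hTa2 : T * a₂ ≠ 0 := mul_ne_zero hT h2
    have hc1 : X₁.card ≤ (T * a₁).val := by
      apply card_bad_le T a₁ hTa1
      intro e he
      obtain ⟨heX, hea⟩ := Finset.mem_filter.mp he
      exact ⟨hea, (Finset.mem_filter.mp heX).2⟩
    have hc2 : X₂.card ≤ (T * a₂).val := by
      apply card_bad_le T a₂ hTa2
      intro e he
      obtain ⟨heX, hea⟩ := Finset.mem_filter.mp he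
      exact ⟨hea, (Finset.mem_filter.mp heX).2⟩
    calc X.card ≤ (X₁ ∪ X₂).card := Finset.card_le_card hsub
      _ ≤ X₁.card + X₂.card := Finset.card_union_le _ _
      _ ≤ _ := by omega
  have hmem : X.card ∈ {n | ∃ X' ⊆ cayleyEdges p A, X'.card = n ∧
      ¬ HasDirCycle (fun x y => (x, y) ∈ cayleyEdges p A \ X')} :=
    ⟨X, Finset.filter_subset _ _, rfl, hacyc⟩
  exact le_trans (Nat.sInf_le hmem) hcard

theorem stmt_18 (p : ℕ) [Fact p.Prime] (hp7 : 7 ≤ p) (a₁ a₂ : ZMod p)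
    (h1 : a₁ ≠ 0) (h2 : a₂ ≠ 0) (hne : a₁ ≠ a₂)
    (htf : ¬ HasShortDirCycle
      (fun x y => (x, y) ∈ cayleyEdges p ({a₁, a₂} : Finset (ZMod p)))) :
    betaCayley p ({a₁, a₂} : Finset (ZMod p)) ≤ (p - 1) / 2 ∧
      ((p : ℚ) - 1) / 2 ≤ (p * (p - 5) / 2) / 2 := by
  have hp : p.Prime := Fact.out
  constructor
  case right =>
    have hp7' : (7 : ℚ) ≤ (p : ℚ) := by exact_mod_cast hp7
    nlinarith [hp7']
  case left =>
  have ha1A : a₁ ∈ ({a₁, a₂} : Finset (ZMod p)) := by simp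
  have ha2A : a₂ ∈ ({a₁, a₂} : Finset (ZMod p)) := by simp
  -- triangle-freeness consequences
  have hsum : a₁ + a₂ ≠ 0 := by
    intro h
    apply htf
    refine ⟨2, fun i => if i = 1 then a₁ else 0, by omega, by omega, ?_, by simp⟩
    intro j hj
    interval_cases j
    · simpa using mem_cayley (0 : ZMod p) ha1A
    · have := mem_cayley a₁ ha2A
      rw [h] at this
      simpa using this
  have h2a1 : a₁ + a₁ + a₂ ≠ 0 := by
    intro h
    apply htf
    refine ⟨3, fun i => if i = 1 then a₁ else if i = 2 then a₁ + a₁ else 0,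
      by omega, by omega, ?_, by simp⟩
    intro j hj
    interval_cases j
    · simpa using mem_cayley (0 : ZMod p) ha1A
    · simpa using mem_cayley a₁ ha1A
    · have := mem_cayley (a₁ + a₁) ha2A
      rw [h] at this
      simpa using this
  have h2a2 : a₁ + (a₂ + a₂) ≠ 0 := by
    intro h
    apply htf
    refine ⟨3, fun i => if i = 1 then a₂ else if i = 2 then a₂ + a₂ else 0,
      by omega, by omega, ?_, by simp⟩
    intro j hj
    interval_cases j
    · simpa using mem_cayley (0 : ZMod p) ha2A
    · simpa using mem_cayley a₂ ha2A
    · have := mem_cayley (a₂ + a₂) ha1A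
      rw [show a₂ + a₂ + a₁ = a₁ + (a₂ + a₂) by ring, h] at this
      simpa using this
  -- the key element z
  set z : ZMod p := (a₁ + a₂) * a₁⁻¹ with hzdef
  have hz0 : z ≠ 0 := mul_ne_zero hsum (inv_ne_zero h1)
  have hzz : (z.val : ZMod p) = z := ZMod.natCast_zmod_val z
  have hz1 : z ≠ 1 := by
    intro h
    rw [hzdef] at h
    field_simp [h1] at h
    exact h2 (by linear_combination h)
  have hzn1 : z ≠ -1 := by
    intro h
    rw [hzdef] at h
    field_simp [h1] at h
    exact h2a1 (by linear_combination h)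
  have hzhalf : (2 : ZMod p) * z ≠ 1 := by
    intro h
    rw [hzdef] at h
    field_simp [h1] at h
    exact h2a2 (by linear_combination h)
  -- val facts
  have hvlt : z.val < p := ZMod.val_lt z
  have hu2 : 2 ≤ z.val := by
    by_contra hcon
    push_neg at hcon
    have : z.val = 0 ∨ z.val = 1 := by omega
    rcases this with hv | hv
    · exact hz0 ((ZMod.val_eq_zero z).mp hv)
    · exact hz1 (by rw [← hzz, hv]; norm_num)
  have hup : z.val ≤ p - 2 := by
    rcases Nat.lt_or_ge z.val (p - 1) with h | h
    · omega
    · exfalso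
      have hv : z.val = p - 1 := by omega
      apply hzn1
      rw [← hzz, hv]
      push_cast [Nat.cast_sub (show 1 ≤ p by omega)]
      simp [ZMod.natCast_self]
  have hmid : 2 * z.val ≠ p + 1 := by
    intro h
    apply hzhalf
    rw [← hzz]
    rw [show (2 : ZMod p) * (z.val : ZMod p) = ((2 * z.val : ℕ) : ZMod p) by push_cast; ring, h]
    push_cast
    simp [ZMod.natCast_self]
  -- apply the number-theoretic lemma
  obtain ⟨j, t, hj1, hjt, htM, hcast⟩ := nt_lemma p z.val hp7 hu2 hup hmid
  have hjp : j < p := by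
    have : (p - 1) / 2 < p := by omega
    omega
  have htp : t < p := by omega
  have hjne : (j : ZMod p) ≠ 0 := by
    rw [Ne, ZMod.natCast_eq_zero_iff]
    intro hd
    exact absurd (Nat.le_of_dvd (by omega) hd) (by omega)
  set T : ZMod p := (j : ZMod p) * a₁⁻¹ with hTdef
  have hTne : T ≠ 0 := mul_ne_zero hjne (inv_ne_zero h1)
  have hTa1 : T * a₁ = (j : ZMod p) := by
    rw [hTdef, mul_assoc, inv_mul_cancel₀ h1, mul_one]
  have hTsum : T * a₁ + T * a₂ = (t : ZMod p) := by
    have e : T * a₁ + T * a₂ = (j : ZMod p) * ((z.val : ℕ) : ZMod p) := by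
      rw [hzz, hTdef, hzdef]; ring
    rw [e, hcast]
  have hTa2 : T * a₂ = ((t - j : ℕ) : ZMod p) := by
    have : T * a₂ = (t : ZMod p) - (j : ZMod p) := by
      rw [← hTsum, hTa1]; ring
    rw [this, Nat.cast_sub (le_of_lt hjt)]
  have hv1 : (T * a₁).val = j := by rw [hTa1]; exact ZMod.val_cast_of_lt hjp
  have hv2 : (T * a₂).val = t - j := by rw [hTa2]; exact ZMod.val_cast_of_lt (by omega)
  calc betaCayley p ({a₁, a₂} : Finset (ZMod p)) ≤ (T * a₁).val + (T * a₂).val :=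
        beta_le a₁ a₂ h1 h2 T hTne
    _ = t := by omega
    _ ≤ (p - 1) / 2 := htM
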